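/- For every integer t with 1 ≤ t ≤ n, the probability that y_t > t/(2n) is at least 1 − exp(−t/6). -/

import Mathlib

open MeasureTheory ProbabilityTheory

/-- Let `X 0, …, X (n-1)` be i.i.d. uniform on `[0,1]` and let
`Y` be their order statistics. For every integer `t` with `1 ≤ t ≤ n`,
`Pr[y_t > t/(2n)] ≥ 1 − exp(−t/6)`. -/
theorem stmt_1
    {Ω : Type*} [MeasurableSpace Ω] {μ : Measure Ω} [IsProbabilityMeasure μ]
    {n : ℕ} (hn : 0 < n)
    (X Y : Fin n → Ω → ℝ)
    (hmeas : ∀ i, Measurable (X i))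
    (hindep : iIndepFun X μ)
    (hunif : ∀ i, Measure.map (X i) μ = volume.restrict (Set.Icc (0 : ℝ) 1))
    (hsorted : ∀ ω, Monotone fun i => Y i ω)
    (hperm : ∀ ω, ∃ σ : Equiv.Perm (Fin n), ∀ i, Y i ω = X (σ i) ω)
    (t : ℕ) (ht1 : 1 ≤ t) (ht2 : t ≤ n) :
    ENNReal.ofReal (1 - Real.exp (-(t : ℝ) / 6)) ≤
      μ {ω | (t : ℝ) / (2 * n) < Y ⟨t - 1, by omega⟩ ω} := by
  have hn' : (0:ℝ) < n := by exact_mod_cast hn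
  set a : ℝ := (t : ℝ) / (2 * n) with ha
  have ha0 : 0 < a := by positivity
  have ha1 : a ≤ 1 := by
    rw [ha, div_le_one (by positivity)]
    have : (t:ℝ) ≤ n := by exact_mod_cast ht2
    linarith
  set k : Fin n := ⟨t - 1, by omega⟩ with hk
  -- indicator variables
  set Z : Fin n → Ω → ℝ := fun i ω => if X i ω ≤ a then 1 else 0 with hZ
  have hZmeas : ∀ i, Measurable (Z i) := by
    intro i
    exact Measurable.ite (measurableSet_le (hmeas i) measurable_const)
      measurable_const measurable_const
  set S : Ω → ℝ := fun ω => ∑ i, Z i ω with hS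
  -- key set equality
  have hset : {ω | Y k ω ≤ a} = {ω | (t:ℝ) ≤ S ω} := by
    ext ω
    obtain ⟨σ, hσ⟩ := hperm ω
    have hSω : S ω = ∑ i, (if Y i ω ≤ a then (1:ℝ) else 0) := by
      show ∑ i, Z i ω = _
      rw [← Equiv.sum_comp σ (fun i => Z i ω)]
      refine Finset.sum_congr rfl fun i _ => ?_
      simp [hZ, hσ i]
    simp only [Set.mem_setOf_eq, hSω]
    constructor
    · intro h
      have hone : ∀ i ∈ Finset.Iic k, (if Y i ω ≤ a then (1:ℝ) else 0) = 1 := by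
        intro i hi
        rw [if_pos (le_trans (hsorted ω (Finset.mem_Iic.mp hi)) h)]
      have : ∑ i ∈ Finset.Iic k, (if Y i ω ≤ a then (1:ℝ) else 0) = (t:ℝ) := by
        rw [Finset.sum_congr rfl hone, Finset.sum_const, Fin.card_Iic]
        have hkval : (k:ℕ) = t - 1 := rfl
        rw [hkval, show t - 1 + 1 = t by omega]
        simp
      rw [← this]
      refine Finset.sum_le_sum_of_subset_of_nonneg (Finset.subset_univ _) ?_
      intro i _ _; positivity
    · intro h
      by_contra hc
      push_neg at hc
      have hzero : ∀ i ∈ Finset.univ, i ∉ Finset.Iio k →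
          (if Y i ω ≤ a then (1:ℝ) else 0) = 0 := by
        intro i _ hi
        rw [Finset.mem_Iio, not_lt] at hi
        rw [if_neg]
        push_neg
        exact lt_of_lt_of_le hc (hsorted ω hi)
      rw [← Finset.sum_subset (Finset.subset_univ _) hzero] at h
      have hle : ∑ i ∈ Finset.Iio k, (if Y i ω ≤ a then (1:ℝ) else 0) ≤ (t:ℝ) - 1 := by
        calc ∑ i ∈ Finset.Iio k, (if Y i ω ≤ a then (1:ℝ) else 0)
            ≤ ∑ _i ∈ Finset.Iio k, (1:ℝ) := by
              refine Finset.sum_le_sum fun i _ => ?_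
              split <;> norm_num
          _ = (t:ℝ) - 1 := by
              rw [Finset.sum_const, Fin.card_Iio]
              have hkval : (k:ℕ) = t - 1 := rfl
              rw [hkval, nsmul_eq_mul, mul_one, Nat.cast_sub ht1, Nat.cast_one]
      linarith
  -- measure of each Bernoulli event
  have hμA : ∀ i, μ {ω | X i ω ≤ a} = ENNReal.ofReal a := by
    intro i
    have : {ω | X i ω ≤ a} = X i ⁻¹' Set.Iic a := rfl
    rw [this, ← Measure.map_apply (hmeas i) measurableSet_Iic, hunif i,
      Measure.restrict_apply measurableSet_Iic]
    have : Set.Iic a ∩ Set.Icc (0:ℝ) 1 = Set.Icc 0 a := by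
      ext x
      simp only [Set.mem_inter_iff, Set.mem_Iic, Set.mem_Icc]
      constructor
      · rintro ⟨h1, h2, _⟩; exact ⟨h2, h1⟩
      · rintro ⟨h1, h2⟩; exact ⟨h2, h1, le_trans h2 ha1⟩
    rw [this, Real.volume_Icc, sub_zero]
  -- the mgf of each Z i
  set s : ℝ := Real.log 2 with hs
  have hs0 : 0 ≤ s := Real.log_nonneg one_le_two
  have hes : Real.exp s = 2 := Real.exp_log two_pos
  have hmgfZ : ∀ i, mgf (Z i) μ s = 1 + a := by
    intro i
    have hA : MeasurableSet {ω | X i ω ≤ a} := measurableSet_le (hmeas i) measurable_const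
    have heq : (fun ω => Real.exp (s * Z i ω)) =
        fun ω => Set.indicator {ω | X i ω ≤ a} (fun _ => Real.exp s - 1) ω + 1 := by
      funext ω
      by_cases h : X i ω ≤ a
      · simp [hZ, h, Set.indicator_of_mem (Set.mem_setOf.mpr h)]
      · simp [hZ, h, Set.indicator_of_notMem (fun hh => h hh)]
    rw [mgf, heq, integral_add ((integrable_const _).indicator hA) (integrable_const 1),
      integral_indicator_const _ hA, integral_const, measureReal_def, measureReal_def, hμA i]
    simp [ENNReal.toReal_ofReal ha0.le, hes]
    ring
  -- independence and mgf of the sum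
  have hZindep : iIndepFun Z μ := by
    have := hindep.comp (fun _ (x : ℝ) => if x ≤ a then (1:ℝ) else 0)
      (fun _ => Measurable.ite measurableSet_Iic measurable_const measurable_const)
    exact this
  have hmgfS : mgf S μ s = (1 + a) ^ n := by
    have := hZindep.mgf_sum hZmeas Finset.univ (t := s)
    have hSeq : S = ∑ i, Z i := by funext ω; simp [hS, Finset.sum_apply]
    rw [hSeq, this]
    simp [hmgfZ]
  -- integrability
  have hSmeas : Measurable S := by
    apply Finset.measurable_sum
    intro i _
    exact hZmeas i
  have hint : Integrable (fun ω => Real.exp (s * S ω)) μ := by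
    refine ⟨((hSmeas.const_mul s).exp).aestronglyMeasurable, ?_⟩
    refine MeasureTheory.HasFiniteIntegral.of_bounded (C := Real.exp (s * n)) ?_
    filter_upwards with ω
    rw [Real.norm_eq_abs, abs_of_pos (Real.exp_pos _)]
    apply Real.exp_le_exp.mpr
    apply mul_le_mul_of_nonneg_left _ hs0
    calc S ω ≤ ∑ _i : Fin n, (1:ℝ) := by
            refine Finset.sum_le_sum fun i _ => ?_
            simp only [hZ]; split <;> norm_num
      _ = n := by simp
  -- Chernoff bound
  have hcher := measure_ge_le_exp_mul_mgf (μ := μ) (X := S) (t:ℝ) hs0 hint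
  rw [hmgfS] at hcher
  -- arithmetic bound
  have harith : Real.exp (-s * t) * (1 + a) ^ n ≤ Real.exp (-(t:ℝ)/6) := by
    have h1 : (1 + a) ^ n ≤ Real.exp a ^ n := by
      apply pow_le_pow_left₀ (by linarith) _ n
      linarith [Real.add_one_le_exp a]
    have h2 : Real.exp a ^ n = Real.exp (a * n) := by
      rw [← Real.exp_nat_mul]; ring_nf
    have h3 : a * n = t / 2 := by
      rw [ha]; field_simp
    calc Real.exp (-s * t) * (1 + a) ^ n
        ≤ Real.exp (-s * t) * Real.exp (t/2) := by
          apply mul_le_mul_of_nonneg_left _ (Real.exp_pos _).le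
          rw [← h3, ← h2]; exact h1
      _ = Real.exp (-s * t + t/2) := by rw [← Real.exp_add]
      _ ≤ Real.exp (-(t:ℝ)/6) := by
          apply Real.exp_le_exp.mpr
          have hlog : (0.6931471803:ℝ) < s := Real.log_two_gt_d9
          have ht1' : (1:ℝ) ≤ t := by exact_mod_cast ht1
          nlinarith
  have hbound : μ {ω | (t:ℝ) ≤ S ω} ≤ ENNReal.ofReal (Real.exp (-(t:ℝ)/6)) := by
    have hne : μ {ω | (t:ℝ) ≤ S ω} ≠ ⊤ := measure_ne_top _ _
    rw [← ENNReal.ofReal_toReal hne]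
    exact ENNReal.ofReal_le_ofReal (le_trans hcher harith)
  -- finish
  have hcompl : {ω | a < Y k ω} = {ω | (t:ℝ) ≤ S ω}ᶜ := by
    rw [← hset]
    ext ω
    simp [not_le]
  have hAmeas : MeasurableSet {ω | (t:ℝ) ≤ S ω} := measurableSet_le measurable_const hSmeas
  have : μ {ω | a < Y k ω} = 1 - μ {ω | (t:ℝ) ≤ S ω} := by
    rw [hcompl, measure_compl hAmeas (measure_ne_top _ _), measure_univ]
  rw [show {ω | (t : ℝ) / (2 * n) < Y ⟨t - 1, by omega⟩ ω} = {ω | a < Y k ω} from rfl, this]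
  rw [ENNReal.ofReal_sub _ (Real.exp_pos _).le, ENNReal.ofReal_one]
  exact tsub_le_tsub_left hbound 1
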